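/- Let a, b, c ∈ ℝ³ and let n_ab, n_bc, n_ca ∈ ℝ³ be arbitrary vectors (the averaged edge normals). Define the cutting-plane normals n_pab = n_ab × (b − a), n_pbc = n_bc × (c − b), n_pca = n_ca × (a − c), and v = n_pab × n_pca, and assume n_pbc · v ≠ 0. Then the point p = a + ((n_pbc · (b − a))/(n_pbc · v)) v lies on all three cutting planes; that is, (p − a) · n_pab = 0, (p − b) · n_pbc = 0, and (p − c) · n_pca = 0. -/

import Mathlib

open scoped RealInnerProductSpace

/-- The vector cross product on `EuclideanSpace ℝ (Fin 3)`. -/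
noncomputable def cross3 (u v : EuclideanSpace ℝ (Fin 3)) : EuclideanSpace ℝ (Fin 3) :=
  (WithLp.equiv 2 (Fin 3 → ℝ)).symm
    (crossProduct ((WithLp.equiv 2 (Fin 3 → ℝ)) u) ((WithLp.equiv 2 (Fin 3 → ℝ)) v))

lemma cross3_inner_left (u w : EuclideanSpace ℝ (Fin 3)) : ⟪cross3 u w, u⟫ = 0 := by
  simp [cross3, crossProduct, PiLp.inner_apply, Fin.sum_univ_three,
    RCLike.inner_apply, conj_trivial, Equiv.refl_apply, Matrix.cons_val_zero,
    Matrix.cons_val_one, Matrix.head_cons, Matrix.cons_val_two, Matrix.tail_cons]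
  ring

lemma cross3_inner_right (u w : EuclideanSpace ℝ (Fin 3)) : ⟪cross3 u w, w⟫ = 0 := by
  simp [cross3, crossProduct, PiLp.inner_apply, Fin.sum_univ_three,
    RCLike.inner_apply, conj_trivial, Equiv.refl_apply, Matrix.cons_val_zero,
    Matrix.cons_val_one, Matrix.head_cons, Matrix.cons_val_two, Matrix.tail_cons]
  ring

/-- **The projection point lies on all three cutting planes.**
With cutting-plane normals `n_pab = n_ab × (b − a)`, `n_pbc = n_bc × (c − b)`,
`n_pca = n_ca × (a − c)` and `v = n_pab × n_pca`, if `n_pbc · v ≠ 0` then the point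
`p = a + ((n_pbc · (b − a))/(n_pbc · v)) v` satisfies `(p − a)·n_pab = 0`,
`(p − b)·n_pbc = 0` and `(p − c)·n_pca = 0`. -/
theorem projection_point_on_cutting_planes
    (a b c nab nbc nca : EuclideanSpace ℝ (Fin 3))
    (npab npbc npca v p : EuclideanSpace ℝ (Fin 3))
    (hpab : npab = cross3 nab (b - a))
    (hpbc : npbc = cross3 nbc (c - b))
    (hpca : npca = cross3 nca (a - c))
    (hv : v = cross3 npab npca)
    (hnz : ⟪npbc, v⟫ ≠ 0)
    (hp : p = a + (⟪npbc, b - a⟫ / ⟪npbc, v⟫) • v) :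
    ⟪p - a, npab⟫ = 0 ∧ ⟪p - b, npbc⟫ = 0 ∧ ⟪p - c, npca⟫ = 0 := by
  set t : ℝ := ⟪npbc, b - a⟫ / ⟪npbc, v⟫ with ht
  have hpa : p - a = t • v := by rw [hp]; abel
  have hvab : ⟪v, npab⟫ = 0 := by rw [hv]; exact cross3_inner_left _ _
  have hvca : ⟪v, npca⟫ = 0 := by rw [hv]; exact cross3_inner_right _ _
  refine ⟨?_, ?_, ?_⟩
  · rw [hpa, real_inner_smul_left, hvab, mul_zero]
  · have : p - b = (a - b) + t • v := by rw [hp]; abel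
    rw [this, inner_add_left, real_inner_smul_left, real_inner_comm npbc v, ht,
      div_mul_cancel₀ _ hnz]
    have : (a - b : EuclideanSpace ℝ (Fin 3)) = -(b - a) := by abel
    rw [this, inner_neg_left, real_inner_comm]
    ring
  · have : p - c = (a - c) + t • v := by rw [hp]; abel
    rw [this, inner_add_left, real_inner_smul_left, hvca, mul_zero, add_zero, hpca,
      real_inner_comm]
    exact cross3_inner_right _ _
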